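/- Let 1 < p₁, p₂ < ∞ with 1/p₁ + 1/p₂ ≥ 1, and let n₁, n₂, m be positive integers. Let D₁, D₂ be n₁×m and n₂×m matrices respectively. Then for all f₁ ∈ L^{p₁}(ℝ^{n₁}), f₂ ∈ L^{p₂}(ℝ^{n₂}), the bilinear fractional integral I(f₁,f₂)(x) = ∫_{ℝ^{n₁+n₂}} f₁(y₁)f₂(y₂)/(|D₁x − y₁| + |D₂x − y₂|)^{n₁/p₁' + n₂/p₂'} dy₁dy₂ satisfies sup_{x ∈ ℝ^m} |I(f₁,f₂)(x)| ≲ ‖f₁‖_{L^{p₁}} ‖f₂‖_{L^{p₂}}. -/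

import Mathlib

open MeasureTheory ENNReal

abbrev E (n : ℕ) : Type := EuclideanSpace ℝ (Fin n)

noncomputable def mvec {n m : ℕ} (D : Matrix (Fin n) (Fin m) ℝ) (x : E m) : E n :=
  (WithLp.equiv 2 (Fin n → ℝ)).symm (D.mulVec ((WithLp.equiv 2 (Fin m → ℝ)) x))

lemma tsum_holder {p q : ℝ} (h : Real.HolderConjugate p q) (a b : ℤ → ℝ≥0∞) :
    ∑' j, a j * b j ≤ (∑' j, a j ^ p) ^ (1/p) * (∑' j, b j ^ q) ^ (1/q) := by
  have := ENNReal.lintegral_mul_le_Lp_mul_Lq (Measure.count : Measure ℤ) h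
    (measurable_of_countable a).aemeasurable (measurable_of_countable b).aemeasurable
  simpa [lintegral_count] using this

lemma tsum_rpow_mono {p q : ℝ} (hp : 0 < p) (hpq : p ≤ q) (b : ℤ → ℝ≥0∞) :
    (∑' j, b j ^ q) ^ (1/q) ≤ (∑' j, b j ^ p) ^ (1/p) := by
  have hq : 0 < q := hp.trans_le hpq
  set B := (∑' j, b j ^ p) ^ (1/p) with hB
  have hBp : B ^ p = ∑' j, b j ^ p := by
    rw [hB, ← ENNReal.rpow_mul, one_div, inv_mul_cancel₀ hp.ne', ENNReal.rpow_one]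
  have key : ∑' j, b j ^ q ≤ B ^ q := by
    have h1 : ∀ j, b j ^ q ≤ b j ^ p * B ^ (q - p) := by
      intro j
      have hbj : b j ≤ B := by
        have : b j ^ p ≤ ∑' j, b j ^ p := ENNReal.le_tsum j
        have := ENNReal.rpow_le_rpow this (by positivity : (0:ℝ) ≤ 1/p)
        rwa [← ENNReal.rpow_mul, mul_one_div, div_self hp.ne', ENNReal.rpow_one, ← hB] at this
      calc b j ^ q = b j ^ p * b j ^ (q - p) := by
            rw [← ENNReal.rpow_add_of_nonneg _ _ hp.le (by linarith)]; ring_nf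
        _ ≤ b j ^ p * B ^ (q - p) := by
            exact mul_le_mul_right (ENNReal.rpow_le_rpow hbj (by linarith)) _
    calc ∑' j, b j ^ q ≤ ∑' j, b j ^ p * B ^ (q-p) := ENNReal.tsum_le_tsum h1
      _ = (∑' j, b j ^ p) * B ^ (q-p) := ENNReal.tsum_mul_right
      _ = B ^ p * B ^ (q - p) := by rw [hBp]
      _ = B ^ q := by rw [← ENNReal.rpow_add_of_nonneg _ _ hp.le (by linarith)]; ring_nf
  calc (∑' j, b j ^ q) ^ (1/q) ≤ (B ^ q) ^ (1/q) :=
        ENNReal.rpow_le_rpow key (by positivity)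
    _ = B := by rw [← ENNReal.rpow_mul, mul_one_div, div_self hq.ne', ENNReal.rpow_one]

lemma geom_sum_ne_top {δ : ℝ} (hδ : 0 < δ) :
    ∑' (m : ℤ), ENNReal.ofReal ((2:ℝ) ^ (-(δ * |(m:ℝ)|))) ≠ ⊤ := by
  set r : ℝ≥0∞ := ENNReal.ofReal ((2:ℝ) ^ (-δ)) with hr
  have hrval : ∀ m : ℤ, ENNReal.ofReal ((2:ℝ) ^ (-(δ * |(m:ℝ)|))) = r ^ m.natAbs := by
    intro m
    have habs : |(m:ℝ)| = (m.natAbs : ℝ) := by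
      rw [← Int.cast_abs, Int.abs_eq_natAbs, Int.cast_natCast]
    rw [habs, hr, ← ENNReal.ofReal_pow (by positivity), ← Real.rpow_natCast ((2:ℝ)^(-δ)),
      ← Real.rpow_mul (by norm_num)]
    ring_nf
  have hrlt : r < 1 := by
    rw [hr]
    have : (2:ℝ) ^ (-δ) < 1 := by
      apply Real.rpow_lt_one_of_one_lt_of_neg (by norm_num) (by linarith)
    calc ENNReal.ofReal ((2:ℝ)^(-δ)) < ENNReal.ofReal 1 := by
          exact ENNReal.ofReal_lt_ofReal_iff (by norm_num) |>.2 this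
      _ = 1 := ENNReal.ofReal_one
  have hsplit : (∑' (m : ℤ), ENNReal.ofReal ((2:ℝ) ^ (-(δ * |(m:ℝ)|)))) =
      (∑' (n : ℕ), ENNReal.ofReal ((2:ℝ) ^ (-(δ * |((n:ℤ):ℝ)|)))) +
      ∑' (n : ℕ), ENNReal.ofReal ((2:ℝ) ^ (-(δ * |((-(n+1):ℤ):ℝ)|))) := by
    exact tsum_of_nat_of_neg_add_one ENNReal.summable ENNReal.summable
  rw [hsplit]
  have hgeo : (∑' (n : ℕ), r ^ n) ≠ ⊤ := by
    rw [ENNReal.tsum_geometric]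
    simp only [ne_eq, ENNReal.inv_eq_top, tsub_eq_zero_iff_le]
    exact fun h => absurd (lt_of_lt_of_le hrlt h) (lt_irrefl _)
  apply ENNReal.add_ne_top.2
  constructor
  · refine ne_top_of_le_ne_top hgeo (ENNReal.tsum_le_tsum fun n => ?_)
    rw [hrval]; simp
  · refine ne_top_of_le_ne_top hgeo (ENNReal.tsum_le_tsum fun n => ?_)
    rw [hrval]
    have h2 : ((-(n+1):ℤ)).natAbs = n + 1 := by omega
    rw [h2]
    exact pow_le_pow_of_le_one (by positivity) hrlt.le (by omega)

lemma setLintegral_holder {α : Type*} [MeasurableSpace α] (μ : Measure α) {p q : ℝ}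
    (h : Real.HolderConjugate p q) {g : α → ℝ≥0∞} (hg : AEMeasurable g μ) (A : Set α) :
    ∫⁻ y in A, g y ∂μ ≤ (∫⁻ y in A, g y ^ p ∂μ) ^ (1/p) * (μ A) ^ (1/q) := by
  have := ENNReal.lintegral_mul_le_Lp_mul_Lq (μ.restrict A) h hg.restrict
    aemeasurable_const (g := fun _ => (1:ℝ≥0∞))
  simpa [setLIntegral_one] using this

noncomputable def T (x : ℝ) : ℝ≥0∞ := ENNReal.ofReal ((2:ℝ) ^ x)

lemma T_mul (a b : ℝ) : T a * T b = T (a + b) := by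
  rw [T, T, T, ← ENNReal.ofReal_mul (by positivity), ← Real.rpow_add (by norm_num)]

lemma T_mono {a b : ℝ} (hab : a ≤ b) : T a ≤ T b :=
  ENNReal.ofReal_le_ofReal ((Real.rpow_le_rpow_left_iff (by norm_num)).2 hab)

lemma T_rpow (a r : ℝ) : T a ^ r = T (a * r) := by
  rw [T, T, ENNReal.ofReal_rpow_of_pos (by positivity), ← Real.rpow_mul (by norm_num)]

lemma T_ne_top (a : ℝ) : T a ≠ ⊤ := ENNReal.ofReal_ne_top

abbrev E' (n : ℕ) : Type := EuclideanSpace ℝ (Fin n)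

/-- dyadic shell around `c` -/
def Sh {n : ℕ} (c : E' n) (j : ℤ) : Set (E' n) :=
  {y | ‖c - y‖ ∈ Set.Ico ((2:ℝ) ^ (j:ℝ)) ((2:ℝ) ^ ((j:ℝ) + 1))}

lemma Sh_measurable {n : ℕ} (c : E' n) (j : ℤ) : MeasurableSet (Sh c j) := by
  have : Continuous fun y : E' n => ‖c - y‖ := (continuous_const.sub continuous_id).norm
  exact this.measurable measurableSet_Ico

lemma Sh_disjoint {n : ℕ} (c : E' n) : Pairwise (Function.onFun Disjoint (Sh c)) := by
  intro j k hjk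
  have : Disjoint (Set.Ico ((2:ℝ) ^ (j:ℝ)) ((2:ℝ) ^ ((j:ℝ)+1)))
      (Set.Ico ((2:ℝ) ^ (k:ℝ)) ((2:ℝ) ^ ((k:ℝ)+1))) := by
    rw [Set.Ico_disjoint_Ico]
    rcases hjk.lt_or_gt with h | h
    · have : (j:ℝ) + 1 ≤ (k:ℝ) := by exact_mod_cast h
      refine le_trans (inf_le_left) (le_trans ?_ le_sup_right)
      exact (Real.rpow_le_rpow_left_iff (by norm_num)).2 this
    · have : (k:ℝ) + 1 ≤ (j:ℝ) := by exact_mod_cast h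
      refine le_trans (inf_le_right) (le_trans ?_ le_sup_left)
      exact (Real.rpow_le_rpow_left_iff (by norm_num)).2 this
  exact Disjoint.preimage _ this

lemma mem_Sh {n : ℕ} {c y : E' n} (h : c ≠ y) : y ∈ Sh c ⌊Real.logb 2 ‖c - y‖⌋ := by
  have hr : 0 < ‖c - y‖ := by
    rw [norm_pos_iff, sub_ne_zero]; exact h
  set x := Real.logb 2 ‖c - y‖ with hx
  have hxv : (2:ℝ) ^ x = ‖c - y‖ := Real.rpow_logb (by norm_num) (by norm_num) hr
  constructor
  · calc (2:ℝ) ^ ((⌊x⌋:ℝ)) ≤ (2:ℝ) ^ x :=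
        Real.rpow_le_rpow_of_exponent_le (by norm_num) (Int.floor_le x)
      _ = ‖c - y‖ := hxv
  · calc ‖c - y‖ = (2:ℝ) ^ x := hxv.symm
      _ < (2:ℝ) ^ ((⌊x⌋:ℝ) + 1) :=
        Real.rpow_lt_rpow_of_exponent_lt (by norm_num) (by exact_mod_cast Int.lt_floor_add_one x)

lemma Sh_volume {n : ℕ} (hn : 0 < n) (c : E' n) (j : ℤ) :
    volume (Sh c j) ≤ T (((j:ℝ) + 1) * n) * volume (Metric.ball (0 : E' n) 1) := by
  haveI : Nonempty (Fin n) := ⟨⟨0, hn⟩⟩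
  have hsub : Sh c j ⊆ Metric.ball c ((2:ℝ) ^ ((j:ℝ)+1)) := by
    intro y hy
    rw [Metric.mem_ball, dist_eq_norm, ← norm_sub_rev]
    exact hy.2
  calc volume (Sh c j) ≤ volume (Metric.ball c ((2:ℝ) ^ ((j:ℝ)+1))) := measure_mono hsub
    _ = ENNReal.ofReal (((2:ℝ) ^ ((j:ℝ)+1)) ^ (Module.finrank ℝ (E' n)))
        * volume (Metric.ball (0 : E' n) 1) :=
      Measure.addHaar_ball volume c (by positivity)
    _ = T (((j:ℝ) + 1) * n) * volume (Metric.ball (0 : E' n) 1) := by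
      rw [finrank_euclideanSpace_fin, T, ← Real.rpow_natCast ((2:ℝ) ^ ((j:ℝ)+1)),
        ← Real.rpow_mul (by norm_num)]

lemma kernel_le {n₁ n₂ : ℕ} {c₁ y₁ : E' n₁} {c₂ y₂ : E' n₂} {lam : ℝ} (hlam : 0 ≤ lam)
    {j k : ℤ} (h₁ : y₁ ∈ Sh c₁ j) (h₂ : y₂ ∈ Sh c₂ k) :
    ENNReal.ofReal ((‖c₁ - y₁‖ + ‖c₂ - y₂‖) ^ (-lam)) ≤ T (((max j k : ℤ):ℝ) * (-lam)) := by
  have h2m : (2:ℝ) ^ (((max j k : ℤ):ℝ)) ≤ ‖c₁ - y₁‖ + ‖c₂ - y₂‖ := by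
    rcases le_total j k with h | h
    · rw [max_eq_right h]
      have := h₂.1
      have h0 : (0:ℝ) ≤ ‖c₁ - y₁‖ := norm_nonneg _
      linarith
    · rw [max_eq_left h]
      have := h₁.1
      have h0 : (0:ℝ) ≤ ‖c₂ - y₂‖ := norm_nonneg _
      linarith
  have : T (((max j k : ℤ):ℝ) * (-lam)) =
      ENNReal.ofReal (((2:ℝ) ^ (((max j k : ℤ):ℝ))) ^ (-lam)) := by
    rw [T, Real.rpow_mul (by norm_num : (0:ℝ) ≤ 2)]
  rw [this]
  exact ENNReal.ofReal_le_ofReal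
    (Real.rpow_le_rpow_of_nonpos (by positivity) h2m (by linarith))

lemma exponent_le {α₁ α₂ δ : ℝ} (hδ₁ : δ ≤ α₁) (hδ₂ : δ ≤ α₂) (j k : ℤ) :
    (j:ℝ) * α₁ + (k:ℝ) * α₂ + ((max j k : ℤ):ℝ) * (-(α₁+α₂)) ≤ -(δ * |(j:ℝ) - (k:ℝ)|) := by
  rcases le_total j k with h | h
  · have hjk : (j:ℝ) ≤ k := by exact_mod_cast h
    rw [max_eq_right h, abs_of_nonpos (by linarith)]
    have := mul_le_mul_of_nonpos_left hδ₁ (show (j:ℝ) - k ≤ 0 by linarith)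
    push_cast
    nlinarith
  · have hjk : (k:ℝ) ≤ j := by exact_mod_cast h
    rw [max_eq_left h, abs_of_nonneg (by linarith)]
    have := mul_le_mul_of_nonpos_left hδ₂ (show (k:ℝ) - j ≤ 0 by linarith)
    push_cast
    nlinarith

lemma core (n₁ n₂ : ℕ) (hn₁ : 0 < n₁) (hn₂ : 0 < n₂) (p₁ p₂ : ℝ)
    (hp₁ : 1 < p₁) (hp₂ : 1 < p₂) (hsum : 1 ≤ 1/p₁ + 1/p₂) :
    ∃ C : ℝ≥0∞, C ≠ ⊤ ∧ ∀ (c₁ : E' n₁) (c₂ : E' n₂) (g₁ : E' n₁ → ℝ≥0∞) (g₂ : E' n₂ → ℝ≥0∞),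
      AEMeasurable g₁ volume → AEMeasurable g₂ volume →
      ∫⁻ y₁, ∫⁻ y₂, g₁ y₁ * g₂ y₂ * ENNReal.ofReal
          ((‖c₁ - y₁‖ + ‖c₂ - y₂‖) ^ (-(n₁ * (1 - 1/p₁) + n₂ * (1 - 1/p₂)))) ∂volume ∂volume
        ≤ C * (∫⁻ y, g₁ y ^ p₁ ∂volume) ^ (1/p₁) * (∫⁻ y, g₂ y ^ p₂ ∂volume) ^ (1/p₂) := by
  have hp₁0 : 0 < p₁ := by linarith
  have hp₂0 : 0 < p₂ := by linarith
  set q₁ : ℝ := p₁.conjExponent with hq₁def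
  set q₂ : ℝ := p₂.conjExponent with hq₂def
  have hq₁ : p₁.HolderConjugate q₁ := Real.HolderConjugate.conjExponent hp₁
  have hq₂ : p₂.HolderConjugate q₂ := Real.HolderConjugate.conjExponent hp₂
  have hq₁0 : 0 < q₁ := hq₁.symm.pos
  have hq₂0 : 0 < q₂ := hq₂.symm.pos
  have h1q₁ : 1 - 1/p₁ = 1/q₁ := by
    have := hq₁.inv_add_inv_eq_one; rw [one_div, one_div]; linarith [this]
  have h1q₂ : 1 - 1/p₂ = 1/q₂ := by
    have := hq₂.inv_add_inv_eq_one; rw [one_div, one_div]; linarith [this]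
  set α₁ : ℝ := n₁ * (1 - 1/p₁) with hα₁def
  set α₂ : ℝ := n₂ * (1 - 1/p₂) with hα₂def
  have hα₁ : 0 < α₁ := by
    have h1 : 0 < 1 - 1/p₁ := by rw [h1q₁]; positivity
    have : (0:ℝ) < n₁ := by exact_mod_cast hn₁
    positivity
  have hα₂ : 0 < α₂ := by
    have h1 : 0 < 1 - 1/p₂ := by rw [h1q₂]; positivity
    have : (0:ℝ) < n₂ := by exact_mod_cast hn₂
    positivity
  set lam : ℝ := α₁ + α₂ with hlamdef
  have hlam : 0 < lam := by positivity
  set δ : ℝ := min α₁ α₂ with hδdef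
  have hδ : 0 < δ := lt_min hα₁ hα₂
  have hp₂q₁ : p₂ ≤ q₁ := by
    have h1 : 1/q₁ ≤ 1/p₂ := by rw [← h1q₁]; linarith
    have h2 := (div_le_div_iff₀ hq₁0 hp₂0).1 h1
    linarith
  -- constants
  set V₁ : ℝ≥0∞ := volume (Metric.ball (0 : E' n₁) 1) with hV₁def
  set V₂ : ℝ≥0∞ := volume (Metric.ball (0 : E' n₂) 1) with hV₂def
  set Q₁ : ℝ≥0∞ := T α₁ * V₁ ^ (1/q₁) with hQ₁def
  set Q₂ : ℝ≥0∞ := T α₂ * V₂ ^ (1/q₂) with hQ₂def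
  set SG : ℝ≥0∞ := ∑' (m : ℤ), T (-(δ * |(m:ℝ)|)) with hSGdef
  have hSG : SG ≠ ⊤ := geom_sum_ne_top hδ
  have hQ₁top : Q₁ ≠ ⊤ := by
    apply ENNReal.mul_ne_top (T_ne_top _)
    exact (ENNReal.rpow_lt_top_of_nonneg (by positivity) measure_ball_lt_top.ne).ne
  have hQ₂top : Q₂ ≠ ⊤ := by
    apply ENNReal.mul_ne_top (T_ne_top _)
    exact (ENNReal.rpow_lt_top_of_nonneg (by positivity) measure_ball_lt_top.ne).ne
  refine ⟨Q₁ * Q₂ * SG, ENNReal.mul_ne_top (ENNReal.mul_ne_top hQ₁top hQ₂top) hSG, ?_⟩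
  intro c₁ c₂ g₁ g₂ hg₁ hg₂
  set Pm : Measure (E' n₁ × E' n₂) := (volume : Measure (E' n₁)).prod (volume : Measure (E' n₂))
    with hPmdef
  set G : E' n₁ × E' n₂ → ℝ≥0∞ := fun z =>
    g₁ z.1 * g₂ z.2 * ENNReal.ofReal ((‖c₁ - z.1‖ + ‖c₂ - z.2‖) ^ (-lam)) with hGdef
  have hg₁' : AEMeasurable (fun z : E' n₁ × E' n₂ => g₁ z.1) Pm :=
    hg₁.comp_quasiMeasurePreserving Measure.quasiMeasurePreserving_fst
  have hg₂' : AEMeasurable (fun z : E' n₁ × E' n₂ => g₂ z.2) Pm :=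
    hg₂.comp_quasiMeasurePreserving Measure.quasiMeasurePreserving_snd
  have hker : Measurable fun z : E' n₁ × E' n₂ =>
      ENNReal.ofReal ((‖c₁ - z.1‖ + ‖c₂ - z.2‖) ^ (-lam)) := by
    apply Measurable.ennreal_ofReal
    apply Measurable.pow _ measurable_const
    exact ((continuous_const.sub continuous_fst).norm.add
      (continuous_const.sub continuous_snd).norm).measurable
  have hG : AEMeasurable G Pm := (hg₁'.mul hg₂').mul hker.aemeasurable
  -- step 1 : iterated integral equals product integral
  have step1 : (∫⁻ y₁, ∫⁻ y₂, g₁ y₁ * g₂ y₂ * ENNReal.ofReal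
      ((‖c₁ - y₁‖ + ‖c₂ - y₂‖) ^ (-lam)) ∂volume ∂volume)
      = ∫⁻ z, G z ∂Pm := by
    exact lintegral_lintegral (f := fun y₁ y₂ => g₁ y₁ * g₂ y₂ * ENNReal.ofReal
      ((‖c₁ - y₁‖ + ‖c₂ - y₂‖) ^ (-lam))) hG
  
  haveI : Nonempty (Fin n₁) := ⟨⟨0, hn₁⟩⟩
  haveI : Nonempty (Fin n₂) := ⟨⟨0, hn₂⟩⟩
  set W : ℤ → ℤ → ℝ≥0∞ := fun j k => T (((max j k : ℤ):ℝ) * (-lam)) with hWdef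
  set F : ℤ × ℤ → E' n₁ × E' n₂ → ℝ≥0∞ := fun jk =>
    (Sh c₁ jk.1 ×ˢ Sh c₂ jk.2).indicator (fun z => g₁ z.1 * g₂ z.2 * W jk.1 jk.2) with hFdef
  have hae : ∀ᵐ z ∂Pm, G z ≤ ∑' jk : ℤ × ℤ, F jk z := by
    have h₁ : Pm {z : E' n₁ × E' n₂ | z.1 = c₁} = 0 := by
      have hset : {z : E' n₁ × E' n₂ | z.1 = c₁}
          = ({c₁} : Set (E' n₁)) ×ˢ (Set.univ : Set (E' n₂)) := by
        ext z
        simp only [Set.mem_setOf_eq, Set.mem_prod, Set.mem_singleton_iff, Set.mem_univ, and_true]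
      rw [hset, Measure.prod_prod, measure_singleton, zero_mul]
    have h₂ : Pm {z : E' n₁ × E' n₂ | z.2 = c₂} = 0 := by
      have hset : {z : E' n₁ × E' n₂ | z.2 = c₂}
          = (Set.univ : Set (E' n₁)) ×ˢ ({c₂} : Set (E' n₂)) := by
        ext z
        simp only [Set.mem_setOf_eq, Set.mem_prod, Set.mem_singleton_iff, Set.mem_univ, true_and]
      rw [hset, Measure.prod_prod, measure_singleton, mul_zero]
    have e₁ : ∀ᵐ z ∂Pm, ¬ z.1 = c₁ := by rw [ae_iff]; simpa using h₁
    have e₂ : ∀ᵐ z ∂Pm, ¬ z.2 = c₂ := by rw [ae_iff]; simpa using h₂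
    filter_upwards [e₁, e₂] with z hz1 hz2
    have hm₁ : z.1 ∈ Sh c₁ ⌊Real.logb 2 ‖c₁ - z.1‖⌋ := mem_Sh (fun h => hz1 h.symm)
    have hm₂ : z.2 ∈ Sh c₂ ⌊Real.logb 2 ‖c₂ - z.2‖⌋ := mem_Sh (fun h => hz2 h.symm)
    set j := ⌊Real.logb 2 ‖c₁ - z.1‖⌋
    set k := ⌊Real.logb 2 ‖c₂ - z.2‖⌋
    have hFz : F (j, k) z = g₁ z.1 * g₂ z.2 * W j k := by
      rw [hFdef]
      exact Set.indicator_of_mem (Set.mem_prod.2 ⟨hm₁, hm₂⟩) _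
    calc G z ≤ g₁ z.1 * g₂ z.2 * W j k :=
          mul_le_mul_right (kernel_le hlam.le hm₁ hm₂) _
      _ = F (j, k) z := hFz.symm
      _ ≤ ∑' jk : ℤ × ℤ, F jk z := ENNReal.le_tsum (j, k)
  have hFmeas : ∀ jk : ℤ × ℤ, AEMeasurable (F jk) Pm := fun jk =>
    ((hg₁'.mul hg₂').mul aemeasurable_const).indicator
      ((Sh_measurable c₁ jk.1).prod (Sh_measurable c₂ jk.2))
  have step3 : ∫⁻ z, G z ∂Pm ≤ ∑' jk : ℤ × ℤ, ∫⁻ z, F jk z ∂Pm :=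
    calc ∫⁻ z, G z ∂Pm ≤ ∫⁻ z, ∑' jk : ℤ × ℤ, F jk z ∂Pm := lintegral_mono_ae hae
      _ = ∑' jk : ℤ × ℤ, ∫⁻ z, F jk z ∂Pm := lintegral_tsum hFmeas
  set a : ℤ → ℝ≥0∞ := fun j => (∫⁻ y in Sh c₁ j, g₁ y ^ p₁ ∂volume) ^ (1/p₁) with hadef
  set b : ℤ → ℝ≥0∞ := fun k => (∫⁻ y in Sh c₂ k, g₂ y ^ p₂ ∂volume) ^ (1/p₂) with hbdef
  have step4 : ∀ jk : ℤ × ℤ, ∫⁻ z, F jk z ∂Pm =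
      (∫⁻ y in Sh c₁ jk.1, g₁ y ∂volume) * (∫⁻ y in Sh c₂ jk.2, g₂ y ∂volume) * W jk.1 jk.2 := by
    intro jk
    have hFeq : F jk = fun z : E' n₁ × E' n₂ =>
        ((Sh c₁ jk.1).indicator g₁ z.1) *
        (((Sh c₂ jk.2).indicator fun y => g₂ y * W jk.1 jk.2) z.2) := by
      funext z
      by_cases hz₁ : z.1 ∈ Sh c₁ jk.1 <;> by_cases hz₂ : z.2 ∈ Sh c₂ jk.2 <;>
        simp [hFdef, Set.indicator_apply, hz₁, hz₂, Set.mem_prod, mul_assoc]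
    rw [hFeq, lintegral_prod_mul (hg₁.indicator (Sh_measurable c₁ jk.1))
        ((hg₂.mul_const _).indicator (Sh_measurable c₂ jk.2)),
      lintegral_indicator (Sh_measurable c₁ jk.1), lintegral_indicator (Sh_measurable c₂ jk.2),
      lintegral_mul_const'' _ hg₂.restrict, mul_assoc]
  have hshell₁ : ∀ j : ℤ, (∫⁻ y in Sh c₁ j, g₁ y ∂volume) ≤ a j * (T ((j:ℝ) * α₁) * Q₁) := by
    intro j
    refine le_trans (setLintegral_holder volume hq₁ hg₁ _) (mul_le_mul_right ?_ _)
    calc (volume (Sh c₁ j)) ^ (1/q₁)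
        ≤ (T (((j:ℝ) + 1) * n₁) * V₁) ^ (1/q₁) :=
          ENNReal.rpow_le_rpow (Sh_volume hn₁ c₁ j) (by positivity)
      _ = T (((j:ℝ) + 1) * n₁) ^ (1/q₁) * V₁ ^ (1/q₁) :=
          ENNReal.mul_rpow_of_nonneg _ _ (by positivity)
      _ = T ((j:ℝ) * α₁ + α₁) * V₁ ^ (1/q₁) := by
          rw [T_rpow]; congr 2; rw [hα₁def, h1q₁]; ring
      _ = T ((j:ℝ) * α₁) * (T α₁ * V₁ ^ (1/q₁)) := by rw [← T_mul, mul_assoc]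
      _ = T ((j:ℝ) * α₁) * Q₁ := by rw [← hQ₁def]
  have hshell₂ : ∀ k : ℤ, (∫⁻ y in Sh c₂ k, g₂ y ∂volume) ≤ b k * (T ((k:ℝ) * α₂) * Q₂) := by
    intro k
    refine le_trans (setLintegral_holder volume hq₂ hg₂ _) (mul_le_mul_right ?_ _)
    calc (volume (Sh c₂ k)) ^ (1/q₂)
        ≤ (T (((k:ℝ) + 1) * n₂) * V₂) ^ (1/q₂) :=
          ENNReal.rpow_le_rpow (Sh_volume hn₂ c₂ k) (by positivity)
      _ = T (((k:ℝ) + 1) * n₂) ^ (1/q₂) * V₂ ^ (1/q₂) :=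
          ENNReal.mul_rpow_of_nonneg _ _ (by positivity)
      _ = T ((k:ℝ) * α₂ + α₂) * V₂ ^ (1/q₂) := by
          rw [T_rpow]; congr 2; rw [hα₂def, h1q₂]; ring
      _ = T ((k:ℝ) * α₂) * (T α₂ * V₂ ^ (1/q₂)) := by rw [← T_mul, mul_assoc]
      _ = T ((k:ℝ) * α₂) * Q₂ := by rw [← hQ₂def]
  have hterm : ∀ jk : ℤ × ℤ, ∫⁻ z, F jk z ∂Pm ≤
      (Q₁ * Q₂) * (a jk.1 * b jk.2 * T (-(δ * |(jk.1:ℝ) - (jk.2:ℝ)|))) := by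
    intro jk
    rw [step4 jk]
    have hTT : T ((jk.1:ℝ) * α₁) * T ((jk.2:ℝ) * α₂) * W jk.1 jk.2
        ≤ T (-(δ * |(jk.1:ℝ) - (jk.2:ℝ)|)) := by
      rw [hWdef, T_mul, T_mul]
      apply T_mono
      have := exponent_le (min_le_left α₁ α₂) (min_le_right α₁ α₂) jk.1 jk.2
      rw [hlamdef]
      linarith [this]
    calc (∫⁻ y in Sh c₁ jk.1, g₁ y ∂volume) * (∫⁻ y in Sh c₂ jk.2, g₂ y ∂volume) * W jk.1 jk.2
        ≤ (a jk.1 * (T ((jk.1:ℝ) * α₁) * Q₁)) * (b jk.2 * (T ((jk.2:ℝ) * α₂) * Q₂))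
            * W jk.1 jk.2 := by
          exact mul_le_mul_left (mul_le_mul' (hshell₁ jk.1) (hshell₂ jk.2)) _
      _ = (Q₁ * Q₂) * ((a jk.1 * b jk.2) *
            (T ((jk.1:ℝ) * α₁) * T ((jk.2:ℝ) * α₂) * W jk.1 jk.2)) := by ring
      _ ≤ (Q₁ * Q₂) * ((a jk.1 * b jk.2) * T (-(δ * |(jk.1:ℝ) - (jk.2:ℝ)|))) :=
          mul_le_mul_right (mul_le_mul_right hTT _) _
  have hsum1 : (∑' jk : ℤ × ℤ, ∫⁻ z, F jk z ∂Pm) ≤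
      (Q₁ * Q₂) * ∑' jk : ℤ × ℤ, a jk.1 * b jk.2 * T (-(δ * |(jk.1:ℝ) - (jk.2:ℝ)|)) := by
    rw [← ENNReal.tsum_mul_left]
    exact ENNReal.tsum_le_tsum hterm
  have hre : (∑' jk : ℤ × ℤ, a jk.1 * b jk.2 * T (-(δ * |(jk.1:ℝ) - (jk.2:ℝ)|)))
      = ∑' mj : ℤ × ℤ, a mj.2 * b (mj.2 - mj.1) * T (-(δ * |(mj.1:ℝ)|)) := by
    rw [← Equiv.tsum_eq (⟨fun mj => (mj.2, mj.2 - mj.1), fun jk => (jk.1 - jk.2, jk.1),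
       fun x => by simp, fun x => by simp⟩ : ℤ × ℤ ≃ ℤ × ℤ) (fun jk : ℤ × ℤ => a jk.1 * b jk.2 *
      T (-(δ * |(jk.1:ℝ) - (jk.2:ℝ)|)))]
    congr 1; funext mj
    simp only [Equiv.coe_fn_mk]
    congr 2
    push_cast
    have h2 : ((mj.2:ℤ):ℝ) - (((mj.2:ℤ):ℝ) - ((mj.1:ℤ):ℝ)) = ((mj.1:ℤ):ℝ) := by ring
    rw [h2]
  have hbb : ∀ m : ℤ, (∑' j : ℤ, a j * b (j - m)) ≤
      (∑' j : ℤ, a j ^ p₁) ^ (1/p₁) * (∑' j : ℤ, b j ^ p₂) ^ (1/p₂) := by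
    intro m
    calc (∑' j : ℤ, a j * b (j - m))
        ≤ (∑' j : ℤ, a j ^ p₁) ^ (1/p₁) * (∑' j : ℤ, b (j - m) ^ q₁) ^ (1/q₁) :=
          tsum_holder hq₁ a (fun j => b (j - m))
      _ = (∑' j : ℤ, a j ^ p₁) ^ (1/p₁) * (∑' k : ℤ, b k ^ q₁) ^ (1/q₁) := by
          congr 2
          exact Equiv.tsum_eq (Equiv.subRight m) (fun k => b k ^ q₁)
      _ ≤ _ := mul_le_mul_right (tsum_rpow_mono hp₂0 hp₂q₁ b) _
  have hS : (∑' mj : ℤ × ℤ, a mj.2 * b (mj.2 - mj.1) * T (-(δ * |(mj.1:ℝ)|)))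
      ≤ SG * ((∑' j : ℤ, a j ^ p₁) ^ (1/p₁) * (∑' j : ℤ, b j ^ p₂) ^ (1/p₂)) := by
    refine le_trans (le_of_eq (ENNReal.tsum_prod
      (f := fun m j : ℤ => a j * b (j - m) * T (-(δ * |(m:ℝ)|))))) ?_
    calc (∑' m : ℤ, ∑' j : ℤ, a j * b (j - m) * T (-(δ * |(m:ℝ)|)))
        = ∑' m : ℤ, T (-(δ * |(m:ℝ)|)) * ∑' j : ℤ, a j * b (j - m) := by
          congr 1; funext m
          rw [← ENNReal.tsum_mul_left]; congr 1; funext j; ring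
      _ ≤ ∑' m : ℤ, T (-(δ * |(m:ℝ)|)) *
            ((∑' j : ℤ, a j ^ p₁) ^ (1/p₁) * (∑' j : ℤ, b j ^ p₂) ^ (1/p₂)) :=
          ENNReal.tsum_le_tsum (fun m => mul_le_mul_right (hbb m) _)
      _ = SG * ((∑' j : ℤ, a j ^ p₁) ^ (1/p₁) * (∑' j : ℤ, b j ^ p₂) ^ (1/p₂)) := by
          rw [ENNReal.tsum_mul_right, hSGdef]
  have hA : (∑' j : ℤ, a j ^ p₁) ^ (1/p₁) ≤ (∫⁻ y, g₁ y ^ p₁ ∂volume) ^ (1/p₁) := by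
    apply ENNReal.rpow_le_rpow _ (by positivity)
    calc (∑' j : ℤ, a j ^ p₁) = ∑' j : ℤ, ∫⁻ y in Sh c₁ j, g₁ y ^ p₁ ∂volume := by
          congr 1; funext j
          rw [hadef, ← ENNReal.rpow_mul, one_div, inv_mul_cancel₀ hp₁0.ne', ENNReal.rpow_one]
      _ = ∫⁻ y in ⋃ j : ℤ, Sh c₁ j, g₁ y ^ p₁ ∂volume :=
          (lintegral_iUnion (fun j => Sh_measurable c₁ j) (Sh_disjoint c₁) _).symm
      _ ≤ ∫⁻ y, g₁ y ^ p₁ ∂volume := setLIntegral_le_lintegral _ _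
  have hB : (∑' j : ℤ, b j ^ p₂) ^ (1/p₂) ≤ (∫⁻ y, g₂ y ^ p₂ ∂volume) ^ (1/p₂) := by
    apply ENNReal.rpow_le_rpow _ (by positivity)
    calc (∑' j : ℤ, b j ^ p₂) = ∑' j : ℤ, ∫⁻ y in Sh c₂ j, g₂ y ^ p₂ ∂volume := by
          congr 1; funext j
          rw [hbdef, ← ENNReal.rpow_mul, one_div, inv_mul_cancel₀ hp₂0.ne', ENNReal.rpow_one]
      _ = ∫⁻ y in ⋃ j : ℤ, Sh c₂ j, g₂ y ^ p₂ ∂volume :=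
          (lintegral_iUnion (fun j => Sh_measurable c₂ j) (Sh_disjoint c₂) _).symm
      _ ≤ ∫⁻ y, g₂ y ^ p₂ ∂volume := setLIntegral_le_lintegral _ _
  calc (∫⁻ y₁, ∫⁻ y₂, g₁ y₁ * g₂ y₂ * ENNReal.ofReal
        ((‖c₁ - y₁‖ + ‖c₂ - y₂‖) ^ (-lam)) ∂volume ∂volume)
      = ∫⁻ z, G z ∂Pm := step1
    _ ≤ ∑' jk : ℤ × ℤ, ∫⁻ z, F jk z ∂Pm := step3
    _ ≤ (Q₁ * Q₂) * ∑' jk : ℤ × ℤ, a jk.1 * b jk.2 *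
          T (-(δ * |(jk.1:ℝ) - (jk.2:ℝ)|)) := hsum1
    _ = (Q₁ * Q₂) * ∑' mj : ℤ × ℤ, a mj.2 * b (mj.2 - mj.1) * T (-(δ * |(mj.1:ℝ)|)) := by
        rw [hre]
    _ ≤ (Q₁ * Q₂) * (SG * ((∑' j : ℤ, a j ^ p₁) ^ (1/p₁) * (∑' j : ℤ, b j ^ p₂) ^ (1/p₂))) :=
        mul_le_mul_right hS _
    _ ≤ (Q₁ * Q₂) * (SG * ((∫⁻ y, g₁ y ^ p₁ ∂volume) ^ (1/p₁) *
          (∫⁻ y, g₂ y ^ p₂ ∂volume) ^ (1/p₂))) :=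
        mul_le_mul_right (mul_le_mul_right (mul_le_mul' hA hB) _) _
    _ = Q₁ * Q₂ * SG * (∫⁻ y, g₁ y ^ p₁ ∂volume) ^ (1/p₁) *
          (∫⁻ y, g₂ y ^ p₂ ∂volume) ^ (1/p₂) := by ring


/-- Endpoint `q = ∞`: for `1 < p₁, p₂ < ∞` with `1/p₁ + 1/p₂ ≥ 1` and arbitrary
matrices `D₁, D₂`, the bilinear fractional integral with exponent
`λ = n₁/p₁' + n₂/p₂'` is uniformly bounded:
`sup_x |I(f₁,f₂)(x)| ≲ ‖f₁‖_{p₁} ‖f₂‖_{p₂}`. -/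
theorem stmt8 (n₁ n₂ m : ℕ) (hn₁ : 0 < n₁) (hn₂ : 0 < n₂) (hm : 0 < m)
    (p₁ p₂ : ℝ) (hp₁ : 1 < p₁) (hp₂ : 1 < p₂) (hsum : 1 ≤ 1/p₁ + 1/p₂)
    (D₁ : Matrix (Fin n₁) (Fin m) ℝ) (D₂ : Matrix (Fin n₂) (Fin m) ℝ) :
    ∃ C : ℝ, 0 < C ∧ ∀ (f₁ : E n₁ → ℝ) (f₂ : E n₂ → ℝ),
      MemLp f₁ (ENNReal.ofReal p₁) volume → MemLp f₂ (ENNReal.ofReal p₂) volume →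
      ∀ x : E m,
        |∫ y₁ : E n₁, ∫ y₂ : E n₂, f₁ y₁ * f₂ y₂ *
            (‖mvec D₁ x - y₁‖ + ‖mvec D₂ x - y₂‖) ^
              (-(n₁ * (1 - 1/p₁) + n₂ * (1 - 1/p₂))) ∂volume ∂volume|
          ≤ C * (eLpNorm f₁ (ENNReal.ofReal p₁) volume).toReal *
              (eLpNorm f₂ (ENNReal.ofReal p₂) volume).toReal := by
  have hp₁0 : 0 < p₁ := by linarith
  have hp₂0 : 0 < p₂ := by linarith
  obtain ⟨C', hC'top, hC'⟩ := core n₁ n₂ hn₁ hn₂ p₁ p₂ hp₁ hp₂ hsum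
  refine ⟨max 1 C'.toReal, lt_of_lt_of_le one_pos (le_max_left _ _), ?_⟩
  intro f₁ f₂ hf₁ hf₂ x
  set lam : ℝ := (n₁ * (1 - 1/p₁) + n₂ * (1 - 1/p₂)) with hlamdef
  set c₁ : E n₁ := mvec D₁ x with hc₁def
  set c₂ : E n₂ := mvec D₂ x with hc₂def
  set g₁ : E n₁ → ℝ≥0∞ := fun y => ENNReal.ofReal |f₁ y| with hg₁def
  set g₂ : E n₂ → ℝ≥0∞ := fun y => ENNReal.ofReal |f₂ y| with hg₂def
  have hg₁m : AEMeasurable g₁ volume :=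
    ENNReal.measurable_ofReal.comp_aemeasurable
      (continuous_abs.measurable.comp_aemeasurable hf₁.1.aemeasurable)
  have hg₂m : AEMeasurable g₂ volume :=
    ENNReal.measurable_ofReal.comp_aemeasurable
      (continuous_abs.measurable.comp_aemeasurable hf₂.1.aemeasurable)
  have hK0 : ∀ (y₁ : E n₁) (y₂ : E n₂), 0 ≤ (‖c₁ - y₁‖ + ‖c₂ - y₂‖) ^ (-lam) := by
    intro y₁ y₂
    exact Real.rpow_nonneg (by positivity) _
  set J : ℝ≥0∞ := ∫⁻ y₁, ∫⁻ y₂, g₁ y₁ * g₂ y₂ * ENNReal.ofReal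
    ((‖c₁ - y₁‖ + ‖c₂ - y₂‖) ^ (-lam)) ∂volume ∂volume with hJdef
  set N₁ : ℝ≥0∞ := eLpNorm f₁ (ENNReal.ofReal p₁) volume with hN₁def
  set N₂ : ℝ≥0∞ := eLpNorm f₂ (ENNReal.ofReal p₂) volume with hN₂def
  have hX₁ : (∫⁻ y, g₁ y ^ p₁ ∂volume) ^ (1/p₁) = N₁ := by
    rw [hN₁def, eLpNorm_eq_lintegral_rpow_enorm_toReal (by simpa using hp₁0) ENNReal.ofReal_ne_top,
      ENNReal.toReal_ofReal hp₁0.le]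
    congr 1
    apply lintegral_congr
    intro y
    simp only [hg₁def]
    rw [← Real.enorm_eq_ofReal_abs]
  have hX₂ : (∫⁻ y, g₂ y ^ p₂ ∂volume) ^ (1/p₂) = N₂ := by
    rw [hN₂def, eLpNorm_eq_lintegral_rpow_enorm_toReal (by simpa using hp₂0) ENNReal.ofReal_ne_top,
      ENNReal.toReal_ofReal hp₂0.le]
    congr 1
    apply lintegral_congr
    intro y
    simp only [hg₂def]
    rw [← Real.enorm_eq_ofReal_abs]
  have hJle : J ≤ C' * N₁ * N₂ := by
    rw [hJdef, ← hX₁, ← hX₂]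
    exact hC' c₁ c₂ g₁ g₂ hg₁m hg₂m
  have hN₁top : N₁ ≠ ⊤ := hf₁.eLpNorm_lt_top.ne
  have hN₂top : N₂ ≠ ⊤ := hf₂.eLpNorm_lt_top.ne
  have hRtop : C' * N₁ * N₂ ≠ ⊤ :=
    ENNReal.mul_ne_top (ENNReal.mul_ne_top hC'top hN₁top) hN₂top
  have hJtop : J ≠ ⊤ := ne_top_of_le_ne_top hRtop hJle
  have inner_bound : ∀ y₁ : E n₁,
      ENNReal.ofReal ‖∫ y₂, f₁ y₁ * f₂ y₂ * (‖c₁ - y₁‖ + ‖c₂ - y₂‖) ^ (-lam) ∂volume‖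
      ≤ ∫⁻ y₂, g₁ y₁ * g₂ y₂ * ENNReal.ofReal ((‖c₁ - y₁‖ + ‖c₂ - y₂‖) ^ (-lam)) ∂volume := by
    intro y₁
    calc ENNReal.ofReal ‖∫ y₂, f₁ y₁ * f₂ y₂ * (‖c₁ - y₁‖ + ‖c₂ - y₂‖) ^ (-lam) ∂volume‖
        ≤ ENNReal.ofReal ((∫⁻ y₂, ENNReal.ofReal
            ‖f₁ y₁ * f₂ y₂ * (‖c₁ - y₁‖ + ‖c₂ - y₂‖) ^ (-lam)‖ ∂volume).toReal) :=
          ENNReal.ofReal_le_ofReal (norm_integral_le_lintegral_norm _)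
      _ ≤ ∫⁻ y₂, ENNReal.ofReal
            ‖f₁ y₁ * f₂ y₂ * (‖c₁ - y₁‖ + ‖c₂ - y₂‖) ^ (-lam)‖ ∂volume :=
          ENNReal.ofReal_toReal_le
      _ = ∫⁻ y₂, g₁ y₁ * g₂ y₂ * ENNReal.ofReal ((‖c₁ - y₁‖ + ‖c₂ - y₂‖) ^ (-lam)) ∂volume := by
          apply lintegral_congr
          intro y₂
          rw [norm_mul, norm_mul, Real.norm_eq_abs, Real.norm_eq_abs, Real.norm_eq_abs,
            abs_of_nonneg (hK0 y₁ y₂), ENNReal.ofReal_mul (by positivity),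
            ENNReal.ofReal_mul (abs_nonneg _)]
  calc |∫ y₁, ∫ y₂, f₁ y₁ * f₂ y₂ * (‖c₁ - y₁‖ + ‖c₂ - y₂‖) ^ (-lam) ∂volume ∂volume|
      = ‖∫ y₁, ∫ y₂, f₁ y₁ * f₂ y₂ * (‖c₁ - y₁‖ + ‖c₂ - y₂‖) ^ (-lam) ∂volume ∂volume‖ :=
        (Real.norm_eq_abs _).symm
    _ ≤ (∫⁻ y₁, ENNReal.ofReal
          ‖∫ y₂, f₁ y₁ * f₂ y₂ * (‖c₁ - y₁‖ + ‖c₂ - y₂‖) ^ (-lam) ∂volume‖ ∂volume).toReal :=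
        norm_integral_le_lintegral_norm _
    _ ≤ J.toReal := ENNReal.toReal_mono hJtop (lintegral_mono inner_bound)
    _ ≤ (C' * N₁ * N₂).toReal := ENNReal.toReal_mono hRtop hJle
    _ = C'.toReal * N₁.toReal * N₂.toReal := by
        rw [ENNReal.toReal_mul, ENNReal.toReal_mul]
    _ ≤ max 1 C'.toReal * N₁.toReal * N₂.toReal := by
        gcongr
        exact le_max_right _ _
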